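/- Let t₁, t₂, u, s₁, s₂ ∈ ℂ with Re(s₁ + u) > 0, Re(s₂ + t₁ + u + 1/2) > 0, and Re(s₂ + t₂ + u + 1/2) > 0. Then the triple integral ∫_{ℝˣ}∫_{ℝˣ}∫_{ℝˣ} |g₁|^{s₂−s₁+t₁+1/2} · |g₂|^{s₁+u} · |c|^{t₂−t₁} · exp(−π c² − π g₁²/c² − π g₂²/g₁²) d×c d×g₂ d×g₁ converges absolutely and equals ζ_ℝ(s₁ + u) · ζ_ℝ(s₂ + t₁ + u + 1/2) · ζ_ℝ(s₂ + t₂ + u + 1/2). (This is the case n = 2, F = ℝ of the paper's theorem on the modified GL_n × GL_{n−1} Rankin–Selberg integral of Sakellaridis, made fully explicit for π = |·|^{t₁} ⊞ |·|^{t₂} spherical on GL₂(ℝ) and σ = |·|^u on GL₁(ℝ) via the paper's propagation formula for the spherical Whittaker function; the integral evaluates to L(s₂ + 1/2, π × σ)·L(s₁, σ), and this result is new in the paper even in the unramified case.) -/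

import Mathlib

open MeasureTheory

/-- The real zeta factor `ζ_ℝ(s) = π^{-s/2} Γ(s/2)`. -/
noncomputable def zetaR (s : ℂ) : ℂ :=
  (Real.pi : ℂ) ^ (-s / 2) * Complex.Gamma (s / 2)

/-- The complex zeta factor `ζ_ℂ(s) = 2 (2π)^{-s} Γ(s)`. -/
noncomputable def zetaC (s : ℂ) : ℂ :=
  2 * (2 * (Real.pi : ℂ)) ^ (-s) * Complex.Gamma s

/-- The multiplicative Haar measure `d×x = dx/|x|` on `ℝˣ = ℝ ∖ {0}`. -/
noncomputable def mulHaarR : Measure ℝ :=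
  volume.withDensity fun x => ENNReal.ofReal (1 / |x|)

/-- The multiplicative Haar measure `d×z = (2/π) dA(z)/|z|²` on `ℂˣ`. -/
noncomputable def mulHaarC : Measure ℂ :=
  volume.withDensity fun z => ENNReal.ofReal (2 / (Real.pi * ‖z‖ ^ 2))

/-- The complex power `|x|^w = exp(w log |x|)` for `x ∈ ℝ`. -/
noncomputable def cpowR (x : ℝ) (w : ℂ) : ℂ :=
  Complex.exp (w * (Real.log |x| : ℂ))

/-- The complex power `|z|_ℂ^w = exp(w log |z|²)` for `z ∈ ℂ`. -/
noncomputable def cpowC (z : ℂ) (w : ℂ) : ℂ :=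
  Complex.exp (w * (Real.log (‖z‖ ^ 2) : ℂ))

/-- The integrand of the `n = 2`, `F = ℝ` modified `GL_n × GL_{n-1}` Rankin–Selberg
integral of Sakellaridis, in the variables `p = (g₁, g₂, c)`:
`|g₁|^{s₂-s₁+t₁+1/2} |g₂|^{s₁+u} |c|^{t₂-t₁} exp(-π c² - π g₁²/c² - π g₂²/g₁²)`. -/
noncomputable def sakIntegrandR2 (s₁ s₂ t₁ t₂ u : ℂ) (p : ℝ × ℝ × ℝ) : ℂ :=
  cpowR p.1 (s₂ - s₁ + t₁ + 1 / 2) * cpowR p.2.1 (s₁ + u) * cpowR p.2.2 (t₂ - t₁) *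
    (Real.exp (-Real.pi * p.2.2 ^ 2 - Real.pi * (p.1 ^ 2 / p.2.2 ^ 2)
      - Real.pi * (p.2.1 ^ 2 / p.1 ^ 2)) : ℂ)

open Set Real

noncomputable def Fg (w : ℂ) (x : ℝ) : ℂ := cpowR x w * (Real.exp (-Real.pi * x ^ 2) : ℂ)

instance : SigmaFinite mulHaarR :=
  SigmaFinite.withDensity_ofReal fun x => 1 / |x|

lemma mulHaarR_singleton : mulHaarR {(0 : ℝ)} = 0 :=
  withDensity_absolutelyContinuous volume _ (by simp)

lemma measurable_cpowR (w : ℂ) : Measurable fun x : ℝ => cpowR x w := by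
  unfold cpowR
  exact Complex.measurable_exp.comp (measurable_const.mul
    (Complex.measurable_ofReal.comp (Real.measurable_log.comp measurable_abs)))

lemma cpowR_mul_ne (w : ℂ) {x y : ℝ} (hx : x ≠ 0) (hy : y ≠ 0) :
    cpowR (x * y) w = cpowR x w * cpowR y w := by
  unfold cpowR
  rw [abs_mul, Real.log_mul (abs_ne_zero.mpr hx) (abs_ne_zero.mpr hy), Complex.ofReal_add,
    mul_add, Complex.exp_add]

lemma cpowR_add (x : ℝ) (v w : ℂ) : cpowR x (v + w) = cpowR x v * cpowR x w := by
  unfold cpowR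
  rw [add_mul, Complex.exp_add]

lemma measurePreserving_mul_right_mulHaarR {a : ℝ} (ha : a ≠ 0) :
    MeasurePreserving (fun x : ℝ => x * a) mulHaarR mulHaarR := by
  refine ⟨measurable_mul_const a, ?_⟩
  ext s hs
  rw [Measure.map_apply (measurable_mul_const a) hs]
  unfold mulHaarR
  rw [withDensity_apply _ (hs.preimage (measurable_mul_const a)), withDensity_apply _ hs]
  have hmg : Measurable fun y : ℝ => ENNReal.ofReal (1 / |y|) * ENNReal.ofReal |a| :=
    ((measurable_const.div measurable_abs).ennreal_ofReal).mul measurable_const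
  have key : ∀ x : ℝ, ENNReal.ofReal (1 / |x|)
      = ENNReal.ofReal (1 / |x * a|) * ENNReal.ofReal |a| := by
    intro x
    rw [← ENNReal.ofReal_mul (by positivity), abs_mul]
    rcases eq_or_ne x 0 with rfl | hx
    · simp
    · field_simp
  calc ∫⁻ x in (fun x : ℝ => x * a) ⁻¹' s, ENNReal.ofReal (1 / |x|) ∂volume
      = ∫⁻ x in (fun x : ℝ => x * a) ⁻¹' s,
          (fun y : ℝ => ENNReal.ofReal (1 / |y|) * ENNReal.ofReal |a|) (x * a) ∂volume := by
        refine setLIntegral_congr_fun (hs.preimage (measurable_mul_const a)) ?_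
        intro x _
        exact key x
    _ = ∫⁻ y in s, ENNReal.ofReal (1 / |y|) * ENNReal.ofReal |a|
          ∂(Measure.map (fun x : ℝ => x * a) volume) :=
        (setLIntegral_map hs hmg (measurable_mul_const a)).symm
    _ = ENNReal.ofReal |a⁻¹| * ∫⁻ y in s, ENNReal.ofReal (1 / |y|) * ENNReal.ofReal |a| ∂volume := by
        rw [Real.map_volume_mul_right ha, Measure.restrict_smul, lintegral_smul_measure, smul_eq_mul]
    _ = ENNReal.ofReal |a⁻¹| * ((∫⁻ y in s, ENNReal.ofReal (1 / |y|) ∂volume)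
          * ENNReal.ofReal |a|) := by
        rw [lintegral_mul_const _ (by exact (measurable_const.div measurable_abs).ennreal_ofReal)]
    _ = ∫⁻ y in s, ENNReal.ofReal (1 / |y|) ∂volume := by
        rw [mul_comm (ENNReal.ofReal |a⁻¹|), mul_assoc, ← ENNReal.ofReal_mul (abs_nonneg a),
          abs_inv, mul_inv_cancel₀ (abs_ne_zero.mpr ha)]
        simp

/-- ℂ-valued version of `integral_comp_abs`. -/
lemma comp_abs_integrable_and_integral {f : ℝ → ℂ}
    (hf : IntegrableOn (fun x => f |x|) (Ioi 0)) :
    Integrable (fun x => f |x|) volume ∧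
      ∫ x, f |x| = 2 * ∫ x in Ioi (0 : ℝ), f |x| := by
  have int_Iic : IntegrableOn (fun x => f |x|) (Iic 0) := by
    rw [← Measure.map_neg_eq_self (volume : Measure ℝ)]
    have m : MeasurableEmbedding fun x : ℝ => -x := (Homeomorph.neg ℝ).measurableEmbedding
    rw [m.integrableOn_map_iff]
    simp_rw [Function.comp_def, abs_neg, neg_preimage, neg_Iic, neg_zero]
    exact Iff.mpr integrableOn_Ici_iff_integrableOn_Ioi hf
  have hInt : Integrable (fun x => f |x|) volume := by
    rw [← integrableOn_univ, ← Iic_union_Ioi (a := (0:ℝ))]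
    exact int_Iic.union hf
  refine ⟨hInt, ?_⟩
  have hIic : ∫ x in Iic (0:ℝ), f |x| = ∫ x in Ioi (0:ℝ), f |x| := by
    rw [← neg_zero, ← integral_comp_neg_Ioi]
    simp [abs_neg]
  calc ∫ x, f |x|
      = (∫ x in Iic (0:ℝ), f |x|) + ∫ x in Ioi (0:ℝ), f |x| := by
        rw [← setIntegral_union (Iic_disjoint_Ioi le_rfl) measurableSet_Ioi int_Iic hf,
          Iic_union_Ioi, Measure.restrict_univ]
    _ = 2 * ∫ x in Ioi (0:ℝ), f |x| := by rw [hIic, two_mul]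

lemma mellin_gaussian (w : ℂ) (hw : 0 < w.re) :
    MellinConvergent (fun t : ℝ => (Real.exp (-Real.pi * t ^ 2) : ℂ)) w ∧
      mellin (fun t : ℝ => (Real.exp (-Real.pi * t ^ 2) : ℂ)) w = zetaR w / 2 := by
  set f₀ : ℝ → ℂ := fun x => (Real.exp (-x) : ℂ) with hf₀
  have hw2 : 0 < (w / 2).re := by
    rw [show (2:ℂ) = ((2:ℝ):ℂ) by norm_num, Complex.div_ofReal_re]
    positivity
  have h2 : ∀ t : ℝ, t ^ (2:ℝ) = t ^ 2 := fun t => by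
    rw [show (2:ℝ) = ((2:ℕ):ℝ) by norm_num, Real.rpow_natCast]
  have hE : (fun t : ℝ => (Real.exp (-Real.pi * t ^ 2) : ℂ))
      = fun t => f₀ (Real.pi * t ^ (2:ℝ)) := by
    funext t
    rw [hf₀, h2, neg_mul]
  have mc0 : MellinConvergent f₀ (w / 2) := by
    refine (Complex.GammaIntegral_convergent hw2).congr_fun ?_ measurableSet_Ioi
    intro t ht
    simp [hf₀, mul_comm, Complex.ofReal_exp, Complex.ofReal_neg]
  have mc1 : MellinConvergent (fun t : ℝ => f₀ (Real.pi * t)) (w / 2) :=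
    (MellinConvergent.comp_mul_left Real.pi_pos).mpr mc0
  have mc2 : MellinConvergent (fun t : ℝ => (Real.exp (-Real.pi * t ^ 2) : ℂ)) w := by
    rw [hE]
    have := (MellinConvergent.comp_rpow (f := fun t : ℝ => f₀ (Real.pi * t))
      (s := w) (a := (2:ℝ)) two_ne_zero).mpr
    simp only [show (((2:ℝ)):ℂ) = (2:ℂ) by norm_num] at this
    exact this mc1
  refine ⟨mc2, ?_⟩
  have hmf₀ : mellin f₀ (w / 2) = Complex.Gamma (w / 2) := by
    rw [Complex.Gamma_eq_integral hw2, Complex.GammaIntegral_eq_mellin]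
  have hcr := mellin_comp_rpow (fun u : ℝ => f₀ (Real.pi * u)) w (2:ℝ)
  simp only [show ((2:ℝ):ℂ) = (2:ℂ) from by norm_num] at hcr
  rw [hE, hcr, mellin_comp_mul_left _ _ Real.pi_pos, hmf₀]
  rw [zetaR]
  simp only [smul_eq_mul, Complex.real_smul]
  rw [show |(2:ℝ)| = (2:ℝ) by norm_num]
  push_cast
  rw [neg_div]
  ring

lemma Fg_main (w : ℂ) (hw : 0 < w.re) :
    Integrable (Fg w) mulHaarR ∧ ∫ x, Fg w x ∂mulHaarR = zetaR w := by
  obtain ⟨mc, mval⟩ := mellin_gaussian w hw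
  set D : ℝ → NNReal := fun x => Real.toNNReal (1 / |x|) with hD
  have hDm : Measurable D := (measurable_const.div measurable_abs).real_toNNReal
  have hmu : mulHaarR = volume.withDensity fun x => ((D x : NNReal) : ENNReal) := rfl
  have hDcoe : ∀ x : ℝ, ((D x : NNReal) : ℝ) = 1 / |x| := fun x =>
    Real.coe_toNNReal _ (by positivity)
  set H : ℝ → ℂ := fun t => (1 / |t| : ℝ) • Fg w t with hH
  have habs : ∀ x : ℝ, H |x| = (D x : NNReal) • Fg w x := by
    intro x
    rw [NNReal.smul_def, hDcoe]
    simp only [hH, Fg, cpowR, abs_abs, sq_abs]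
  have hioi : EqOn (fun t : ℝ => (t:ℂ) ^ (w - 1) • (Real.exp (-Real.pi * t ^ 2) : ℂ)) H
      (Ioi 0) := by
    intro t ht
    have ht0 : (0:ℝ) < t := ht
    have htne : (t:ℂ) ≠ 0 := Complex.ofReal_ne_zero.mpr ht0.ne'
    have hexpL : Complex.exp ((Real.log t : ℂ)) = (t:ℂ) := by
      rw [← Complex.ofReal_exp, Real.exp_log ht0]
    simp only [hH, Fg, cpowR, smul_eq_mul, Complex.real_smul, abs_of_pos ht0]
    rw [Complex.cpow_def_of_ne_zero htne, ← Complex.ofReal_log ht0.le,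
      show (Real.log t : ℂ) * (w - 1) = w * (Real.log t : ℂ) + -(Real.log t : ℂ) by ring,
      Complex.exp_add, Complex.exp_neg, hexpL]
    push_cast
    field_simp
  have hH_ioi : IntegrableOn H (Ioi 0) := mc.congr_fun hioi measurableSet_Ioi
  have heq : EqOn (fun x : ℝ => H |x|) H (Ioi 0) := fun x hx =>
    show H |x| = H x by rw [abs_of_pos (show (0:ℝ) < x from hx)]
  have hH_abs_ioi : IntegrableOn (fun x : ℝ => H |x|) (Ioi 0) :=
    hH_ioi.congr_fun (fun x hx => (heq hx).symm) measurableSet_Ioi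
  obtain ⟨hint, hval⟩ := comp_abs_integrable_and_integral hH_abs_ioi
  have hmel : mellin (fun t : ℝ => (Real.exp (-Real.pi * t ^ 2) : ℂ)) w
      = ∫ x in Ioi (0:ℝ), H x := setIntegral_congr_fun measurableSet_Ioi hioi
  have hvalIoi : ∫ x in Ioi (0:ℝ), H |x| = zetaR w / 2 := by
    rw [setIntegral_congr_fun measurableSet_Ioi heq, ← hmel, mval]
  have hval' : ∫ x, H |x| = zetaR w := by
    rw [hval, hvalIoi]; ring
  constructor
  · rw [hmu]
    refine (integrable_withDensity_iff_integrable_smul₀ hDm.aemeasurable).mpr ?_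
    exact hint.congr (Filter.Eventually.of_forall fun x => habs x)
  · rw [hmu, integral_withDensity_eq_integral_smul₀ hDm.aemeasurable]
    rw [← hval']
    exact integral_congr_ae (Filter.Eventually.of_forall fun x => (habs x).symm)

lemma sak_eq (s₁ s₂ t₁ t₂ u : ℂ) {y x c : ℝ} (hy : y ≠ 0) (hx : x ≠ 0) (hc : c ≠ 0) :
    sakIntegrandR2 s₁ s₂ t₁ t₂ u (y * c, x * (y * c), c)
      = Fg (s₂ + t₁ + u + 1 / 2) y * (Fg (s₁ + u) x * Fg (s₂ + t₂ + u + 1 / 2) c) := by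
  have hyc : y * c ≠ 0 := mul_ne_zero hy hc
  have e1 : (y * c) ^ 2 / c ^ 2 = y ^ 2 := by
    rw [mul_pow]; exact mul_div_cancel_right₀ _ (pow_ne_zero 2 hc)
  have e2 : (x * (y * c)) ^ 2 / (y * c) ^ 2 = x ^ 2 := by
    rw [mul_pow]; exact mul_div_cancel_right₀ _ (pow_ne_zero 2 hyc)
  unfold sakIntegrandR2 Fg
  dsimp only
  rw [e1, e2, cpowR_mul_ne _ hy hc, cpowR_mul_ne _ hx hyc, cpowR_mul_ne _ hy hc,
    show -Real.pi * c ^ 2 - Real.pi * y ^ 2 - Real.pi * x ^ 2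
      = -Real.pi * y ^ 2 + (-Real.pi * x ^ 2 + -Real.pi * c ^ 2) by ring,
    Real.exp_add, Real.exp_add]
  push_cast
  simp only [cpowR, Complex.ofReal_exp, ← Complex.exp_add]
  congr 1
  ring

lemma measurable_sak (s₁ s₂ t₁ t₂ u : ℂ) : Measurable (sakIntegrandR2 s₁ s₂ t₁ t₂ u) := by
  unfold sakIntegrandR2
  have m1 : Measurable fun p : ℝ × ℝ × ℝ => cpowR p.1 (s₂ - s₁ + t₁ + 1 / 2) :=
    (measurable_cpowR _).comp measurable_fst
  have m2 : Measurable fun p : ℝ × ℝ × ℝ => cpowR p.2.1 (s₁ + u) :=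
    (measurable_cpowR _).comp (measurable_snd.fst)
  have m3 : Measurable fun p : ℝ × ℝ × ℝ => cpowR p.2.2 (t₂ - t₁) :=
    (measurable_cpowR _).comp (measurable_snd.snd)
  have m4 : Measurable fun p : ℝ × ℝ × ℝ =>
      (Real.exp (-Real.pi * p.2.2 ^ 2 - Real.pi * (p.1 ^ 2 / p.2.2 ^ 2)
        - Real.pi * (p.2.1 ^ 2 / p.1 ^ 2)) : ℂ) := by
    apply Complex.measurable_ofReal.comp
    apply Real.measurable_exp.comp
    fun_prop
  exact ((m1.mul m2).mul m3).mul m4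

/-- For `Re(s₁ + u) > 0`, `Re(s₂ + t₁ + u + 1/2) > 0`, `Re(s₂ + t₂ + u + 1/2) > 0`, the
triple integral `∫∫∫ |g₁|^{s₂-s₁+t₁+1/2} |g₂|^{s₁+u} |c|^{t₂-t₁}
  e^{-π c² - π g₁²/c² - π g₂²/g₁²} d×c d×g₂ d×g₁` converges absolutely and equals
`ζ_ℝ(s₁+u) ζ_ℝ(s₂+t₁+u+1/2) ζ_ℝ(s₂+t₂+u+1/2)`. -/
theorem stmt_12 (t₁ t₂ u s₁ s₂ : ℂ) (h₁ : 0 < (s₁ + u).re)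
    (h₂ : 0 < (s₂ + t₁ + u + 1 / 2).re) (h₃ : 0 < (s₂ + t₂ + u + 1 / 2).re) :
    Integrable (sakIntegrandR2 s₁ s₂ t₁ t₂ u) (mulHaarR.prod (mulHaarR.prod mulHaarR)) ∧
      ∫ p : ℝ × ℝ × ℝ, sakIntegrandR2 s₁ s₂ t₁ t₂ u p
          ∂(mulHaarR.prod (mulHaarR.prod mulHaarR)) =
        zetaR (s₁ + u) * zetaR (s₂ + t₁ + u + 1 / 2) * zetaR (s₂ + t₂ + u + 1 / 2) := by
  set μ := mulHaarR
  set μ3 := μ.prod (μ.prod μ) with hμ3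
  -- a.e. nonvanishing of coordinates
  have haeμ : ∀ᵐ a ∂μ, a ≠ 0 := by
    rw [ae_iff]
    simpa using mulHaarR_singleton
  have haeprod : ∀ᵐ q : ℝ × ℝ ∂(μ.prod μ), q.2 ≠ 0 := by
    rw [ae_iff]
    have hset : {q : ℝ × ℝ | ¬ q.2 ≠ 0} = (univ : Set ℝ) ×ˢ ({0} : Set ℝ) := by
      ext ⟨a, b⟩; simp [eq_comm]
    rw [hset, Measure.prod_prod, mulHaarR_singleton, mul_zero]
  -- the measure preserving substitution
  have hgm2 : Measurable (Function.uncurry fun (a : ℝ) (q : ℝ × ℝ) => (q.1 * a, q.2)) :=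
    (measurable_snd.fst.mul measurable_fst).prodMk measurable_snd.snd
  have hmapae2 : ∀ᵐ a ∂μ,
      Measure.map (fun q : ℝ × ℝ => (q.1 * a, q.2)) (μ.prod μ) = μ.prod μ := by
    filter_upwards [haeμ] with a ha
    have hmp := (measurePreserving_mul_right_mulHaarR ha).prod (MeasurePreserving.id μ)
    have hfn : (fun q : ℝ × ℝ => (q.1 * a, q.2)) = Prod.map (fun x : ℝ => x * a) id := by
      funext q; rfl
    rw [hfn]
    exact hmp.map_eq
  have hS2 : MeasurePreserving (fun p : ℝ × (ℝ × ℝ) => (p.1, (p.2.1 * p.1, p.2.2))) μ3 μ3 := by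
    have h := (MeasurePreserving.id μ).skew_product hgm2 hmapae2
    exact h
  have hgm1 : Measurable (Function.uncurry fun (q : ℝ × ℝ) (y : ℝ) => y * q.2) :=
    measurable_snd.mul measurable_fst.snd
  have hmapae1 : ∀ᵐ q : ℝ × ℝ ∂(μ.prod μ),
      Measure.map (fun y : ℝ => y * q.2) μ = μ := by
    filter_upwards [haeprod] with q hq
    exact (measurePreserving_mul_right_mulHaarR hq).map_eq
  have hS1 : MeasurePreserving (fun p : (ℝ × ℝ) × ℝ => (p.1, p.2 * p.1.2))
      ((μ.prod μ).prod μ) ((μ.prod μ).prod μ) := by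
    have h := (MeasurePreserving.id (μ.prod μ)).skew_product hgm1 hmapae1
    exact h
  have hswap1 : MeasurePreserving (Prod.swap : ℝ × (ℝ × ℝ) → (ℝ × ℝ) × ℝ)
      μ3 ((μ.prod μ).prod μ) := Measure.measurePreserving_swap
  have hswap2 : MeasurePreserving (Prod.swap : (ℝ × ℝ) × ℝ → ℝ × (ℝ × ℝ))
      ((μ.prod μ).prod μ) μ3 := Measure.measurePreserving_swap
  have hT : MeasurePreserving
      (fun q : ℝ × ℝ × ℝ => (q.1 * q.2.2, (q.2.1 * (q.1 * q.2.2), q.2.2))) μ3 μ3 := by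
    have hcomp := hS2.comp (hswap2.comp (hS1.comp hswap1))
    exact hcomp
  set T : ℝ × ℝ × ℝ → ℝ × ℝ × ℝ :=
    fun q => (q.1 * q.2.2, (q.2.1 * (q.1 * q.2.2), q.2.2)) with hTdef
  -- almost everywhere identification with a product function
  have hae1 : ∀ᵐ q : ℝ × ℝ × ℝ ∂μ3, q.1 ≠ 0 := by
    rw [ae_iff]
    have hset : {q : ℝ × ℝ × ℝ | ¬ q.1 ≠ 0} = ({0} : Set ℝ) ×ˢ (univ : Set (ℝ × ℝ)) := by
      ext ⟨a, b, c⟩; simp [eq_comm]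
    rw [hset, Measure.prod_prod, mulHaarR_singleton, zero_mul]
  have hae2 : ∀ᵐ q : ℝ × ℝ × ℝ ∂μ3, q.2.1 ≠ 0 := by
    rw [ae_iff]
    have hset : {q : ℝ × ℝ × ℝ | ¬ q.2.1 ≠ 0}
        = (univ : Set ℝ) ×ˢ (({0} : Set ℝ) ×ˢ (univ : Set ℝ)) := by
      ext ⟨a, b, c⟩; simp [eq_comm]
    rw [hset, Measure.prod_prod, Measure.prod_prod, mulHaarR_singleton, zero_mul, mul_zero]
  have hae3 : ∀ᵐ q : ℝ × ℝ × ℝ ∂μ3, q.2.2 ≠ 0 := by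
    rw [ae_iff]
    have hset : {q : ℝ × ℝ × ℝ | ¬ q.2.2 ≠ 0}
        = (univ : Set ℝ) ×ˢ ((univ : Set ℝ) ×ˢ ({0} : Set ℝ)) := by
      ext ⟨a, b, c⟩; simp [eq_comm]
    rw [hset, Measure.prod_prod, Measure.prod_prod, mulHaarR_singleton, mul_zero, mul_zero]
  set G : ℝ × ℝ × ℝ → ℂ := fun q =>
    Fg (s₂ + t₁ + u + 1 / 2) q.1 * (Fg (s₁ + u) q.2.1 * Fg (s₂ + t₂ + u + 1 / 2) q.2.2) with hG
  have hae : (fun q => sakIntegrandR2 s₁ s₂ t₁ t₂ u (T q)) =ᵐ[μ3] G := by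
    filter_upwards [hae1, hae2, hae3] with q h1 h2 h3
    exact sak_eq s₁ s₂ t₁ t₂ u h1 h2 h3
  obtain ⟨hF1i, hF1v⟩ := Fg_main _ h₂
  obtain ⟨hF2i, hF2v⟩ := Fg_main _ h₁
  obtain ⟨hF3i, hF3v⟩ := Fg_main _ h₃
  have hGint : Integrable G μ3 := hF1i.mul_prod (hF2i.mul_prod hF3i)
  have hsm : AEStronglyMeasurable (sakIntegrandR2 s₁ s₂ t₁ t₂ u) μ3 :=
    (measurable_sak s₁ s₂ t₁ t₂ u).aestronglyMeasurable
  have hcompInt : Integrable (fun q => sakIntegrandR2 s₁ s₂ t₁ t₂ u (T q)) μ3 :=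
    hGint.congr hae.symm
  have hsm' : AEStronglyMeasurable (sakIntegrandR2 s₁ s₂ t₁ t₂ u) (Measure.map T μ3) := by
    rw [hT.map_eq]; exact hsm
  constructor
  · rw [← hT.map_eq]
    exact (integrable_map_measure hsm' hT.aemeasurable).mpr hcompInt
  · have hGval : ∫ q, G q ∂μ3 = zetaR (s₂ + t₁ + u + 1 / 2)
        * (zetaR (s₁ + u) * zetaR (s₂ + t₂ + u + 1 / 2)) := by
      have hinner := integral_prod_mul (μ := μ) (ν := μ)
        (Fg (s₁ + u)) (Fg (s₂ + t₂ + u + 1 / 2))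
      have houter := integral_prod_mul (μ := μ) (ν := μ.prod μ)
        (Fg (s₂ + t₁ + u + 1 / 2))
        (fun r : ℝ × ℝ => Fg (s₁ + u) r.1 * Fg (s₂ + t₂ + u + 1 / 2) r.2)
      rw [hμ3]
      simp only [hG]
      rw [houter, hinner, hF1v, hF2v, hF3v]
    calc ∫ p, sakIntegrandR2 s₁ s₂ t₁ t₂ u p ∂μ3
        = ∫ p, sakIntegrandR2 s₁ s₂ t₁ t₂ u p ∂(Measure.map T μ3) := by rw [hT.map_eq]
      _ = ∫ q, sakIntegrandR2 s₁ s₂ t₁ t₂ u (T q) ∂μ3 := integral_map hT.aemeasurable hsm'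
      _ = ∫ q, G q ∂μ3 := integral_congr_ae hae
      _ = zetaR (s₁ + u) * zetaR (s₂ + t₁ + u + 1 / 2) * zetaR (s₂ + t₂ + u + 1 / 2) := by
          rw [hGval]; ring
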